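/- Let ρ be a real number and (Φ(n))_{n≥1} a real sequence with Φ(1) = ρ. Define Φ̄(n) = Φ(n) − ρ·n, Ψ(n) = (Φ̄(n) − Φ̄(n+1))/n, Φ(n:1) = ρ·n and Φ(n:m) = −C(n,m)·∇^{m−2}Ψ(n−m+1) for 2 ≤ m ≤ n. Then for every n ≥ 1, Φ(n) = Φ(n:1) + Φ(n:2) + ⋯ + Φ(n:n). -/
import Mathlib


open Finset MeasureTheory

/-- A composition of a positive integer: a nonempty list of positive parts. -/
def IsComposition (c : List ℕ) : Prop := c ≠ [] ∧ ∀ x ∈ c, 0 < x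

/-- An infinite decrement matrix: nonnegative triangular array with rows summing to 1. -/
def IsDecrementMatrix (q : ℕ → ℕ → ℝ) : Prop :=
  (∀ b k, 1 ≤ k → k ≤ b → 0 ≤ q b k) ∧
  ∀ b, 1 ≤ b → ∑ k ∈ Finset.Icc 1 b, q b k = 1

/-- Right-hand side of Möhle's recursion for `p` at the composition `c`, with coefficients
from the decrement matrix `q`. -/
noncomputable def mohleRHS (q : ℕ → ℕ → ℝ) (p : List ℕ → ℝ) (c : List ℕ) : ℝ :=
  q c.sum 1 / (c.sum : ℝ) *
      ∑ j ∈ Finset.range c.length, (if c.getD j 0 = 1 then p (c.eraseIdx j) else 0) +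
    ∑ k ∈ Finset.Icc 2 c.sum, q c.sum k *
      ∑ j ∈ Finset.range c.length,
        (if k ≤ c.getD j 0 then
            ((c.getD j 0).choose k : ℝ) / (c.sum.choose k : ℝ) * p (c.set j (c.getD j 0 - k + 1))
          else 0)

/-- Möhle's recursion holds for `p` at the composition `c`. -/
def MohleRec (q : ℕ → ℕ → ℝ) (p : List ℕ → ℝ) (c : List ℕ) : Prop := p c = mohleRHS q p c

/-- The (backward) consistency recursion for a decrement matrix, at level `b`. -/
def ConsistencyRec (q : ℕ → ℕ → ℝ) (b : ℕ) : Prop :=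
  (∀ k, 2 ≤ k → k ≤ b →
    q b k = ((k : ℝ) + 1) / ((b : ℝ) + 1) * q (b + 1) (k + 1)
      + ((b : ℝ) + 1 - (k : ℝ)) / ((b : ℝ) + 1) * q (b + 1) k
      + 1 / ((b : ℝ) + 1) * q (b + 1) 1 * q b k
      + 2 / ((b : ℝ) + 1) * q (b + 1) 2 * q b k) ∧
  q b 1 = (b : ℝ) / ((b : ℝ) + 1) * q (b + 1) 1
    + 1 / ((b : ℝ) + 1) * q (b + 1) 1 * q b 1
    + 2 / ((b : ℝ) + 1) * q (b + 1) 2 * q b 1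

/-- A finite EPPF on compositions of `m ≤ n`: nonnegative, symmetric, normalized,
satisfying the addition rule below level `n` (with the convention `p(∅) = 1`). -/
def IsFiniteEPPF (n : ℕ) (p : List ℕ → ℝ) : Prop :=
  p [] = 1 ∧ p [1] = 1 ∧
  (∀ c, IsComposition c → c.sum ≤ n → 0 ≤ p c) ∧
  (∀ c c', IsComposition c → c.sum ≤ n → List.Perm c c' → p c = p c') ∧
  ∀ c, IsComposition c → c.sum < n →
    p c = p (c ++ [1]) + ∑ i ∈ Finset.range c.length, p (c.set i (c.getD i 0 + 1))

/-- An infinite EPPF: nonnegative, symmetric, normalized, satisfying the addition rule. -/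
def IsInfEPPF (p : List ℕ → ℝ) : Prop :=
  p [1] = 1 ∧
  (∀ c, IsComposition c → 0 ≤ p c) ∧
  (∀ c c', IsComposition c → List.Perm c c' → p c = p c') ∧
  ∀ c, IsComposition c →
    p c = p (c ++ [1]) + ∑ i ∈ Finset.range c.length, p (c.set i (c.getD i 0 + 1))

/-- `Φ(b:k)` for the `(Λ, ρ)`-coalescent with freeze. -/
noncomputable def coalPhiK (Λ : Measure (Set.Icc (0:ℝ) 1)) (ρ : ℝ) (b k : ℕ) : ℝ :=
  if k = 1 then ρ * b
  else (b.choose k : ℝ) * ∫ x, (x : ℝ) ^ (k - 2) * (1 - (x : ℝ)) ^ (b - k) ∂Λ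

/-- `Φ(b) = ∑_{k=1}^b Φ(b:k)`, the total rate. -/
noncomputable def coalPhi (Λ : Measure (Set.Icc (0:ℝ) 1)) (ρ : ℝ) (b : ℕ) : ℝ :=
  ∑ k ∈ Finset.Icc 1 b, coalPhiK Λ ρ b k

/-- Iterated backward difference `∇^j c (n) = ∑_{i=0}^j (-1)^i C(j,i) c(n+i)`. -/
def nablaIter (c : ℕ → ℝ) (j n : ℕ) : ℝ :=
  ∑ i ∈ Finset.range (j + 1), (-1 : ℝ) ^ i * (j.choose i : ℝ) * c (n + i)

/-- `Φ̄(n) = Φ(n) - ρ n`. -/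
noncomputable def phiBar (Φ : ℕ → ℝ) (ρ : ℝ) (n : ℕ) : ℝ := Φ n - ρ * n

/-- `Ψ(n) = ∇Φ̄(n) / n`. -/
noncomputable def psiOf (Φ : ℕ → ℝ) (ρ : ℝ) (n : ℕ) : ℝ :=
  (phiBar Φ ρ n - phiBar Φ ρ (n + 1)) / n

/-- `Φ(n:1) = ρ n` and `Φ(n:m) = -C(n,m) ∇^{m-2} Ψ (n-m+1)` for `m ≥ 2`. -/
noncomputable def phiNM (Φ : ℕ → ℝ) (ρ : ℝ) (n m : ℕ) : ℝ :=
  if m = 1 then ρ * n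
  else -(n.choose m : ℝ) * nablaIter (psiOf Φ ρ) (m - 2) (n - m + 1)

lemma altSum (N : ℕ) : ∀ m : ℕ,
    ∑ i ∈ Finset.range (m+1), (-1:ℝ)^i * ((N+1).choose i : ℝ)
      = (-1)^m * (N.choose m : ℝ) := by
  intro m
  induction m with
  | zero => simp
  | succ m ih =>
    rw [Finset.sum_range_succ, ih, Nat.choose_succ_succ N m]
    push_cast
    ring

lemma midTele (n M : ℕ) (h : M+3 ≤ n) :
    ∑ i ∈ Finset.range M,
      ((-1:ℝ)^(i+1) * (((n+1).choose (i+1)) : ℝ) * (((n+1-2-(i+1)).choose (M+1-(i+1))) : ℝ)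
       - (-1:ℝ)^(i+1) * ((n.choose (i+1)) : ℝ) * (((n-2-(i+1)).choose (M+1-(i+1))) : ℝ))
    = (-1:ℝ)^M * (n.choose M : ℝ) - ((n-2).choose M : ℝ) := by
  calc ∑ i ∈ Finset.range M,
      ((-1:ℝ)^(i+1) * (((n+1).choose (i+1)) : ℝ) * (((n+1-2-(i+1)).choose (M+1-(i+1))) : ℝ)
       - (-1:ℝ)^(i+1) * ((n.choose (i+1)) : ℝ) * (((n-2-(i+1)).choose (M+1-(i+1))) : ℝ))
      = ∑ i ∈ Finset.range M,
        ((fun j => (-1:ℝ)^j * (n.choose j : ℝ) * (((n-2-j).choose (M-j)) : ℝ)) (i+1)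
         - (fun j => (-1:ℝ)^j * (n.choose j : ℝ) * (((n-2-j).choose (M-j)) : ℝ)) i) := by
        apply Finset.sum_congr rfl
        intro i hi
        simp only [Finset.mem_range] at hi
        simp only []
        have e1 : n+1-2-(i+1) = (n-3-i)+1 := by omega
        have e2 : M+1-(i+1) = (M-1-i)+1 := by omega
        have e3 : n-2-(i+1) = n-3-i := by omega
        have e4 : M-(i+1) = M-1-i := by omega
        have e5 : n-2-i = (n-3-i)+1 := by omega
        have e6 : M-i = (M-1-i)+1 := by omega
        rw [e1, e2, e3, e4, e5, e6, Nat.choose_succ_succ n i,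
          Nat.choose_succ_succ (n-3-i) (M-1-i)]
        push_cast
        ring
    _ = _ := by
        rw [Finset.sum_range_sub
          (fun j => (-1:ℝ)^j * (n.choose j : ℝ) * (((n-2-j).choose (M-j)) : ℝ)) M]
        simp [Nat.sub_self]

lemma keyB : ∀ (m n : ℕ), m + 2 ≤ n →
    ∑ i ∈ Finset.range (m+1),
      (-1:ℝ)^i * (n.choose i : ℝ) * ((n-2-i).choose (m-i) : ℝ)
      = (-1)^m * ((m:ℝ)+1) := by
  rintro (_ | M) n hn
  · simp
  · induction n, hn using Nat.le_induction with
    | base =>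
      have h1 : ∀ i ∈ Finset.range (M+1+1),
          (-1:ℝ)^i * ((M+1+2).choose i : ℝ) * (((M+1+2-2-i).choose (M+1-i)) : ℝ)
          = (-1:ℝ)^i * (((M+2)+1).choose i : ℝ) := by
        intro i hi
        simp only [Finset.mem_range] at hi
        have e : M+1+2-2-i = M+1-i := by omega
        rw [e, Nat.choose_self]
        push_cast
        ring
      rw [Finset.sum_congr rfl h1]
      rw [show M+1+1 = (M+1)+1 from rfl, altSum (M+2) (M+1), Nat.choose_succ_self_right]
      push_cast
      ring
    | succ n hn ih =>
      have hd := midTele n M (by omega)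
      rw [Finset.sum_sub_distrib] at hd
      rw [← ih]
      have expand : ∀ f : ℕ → ℝ, ∑ i ∈ Finset.range (M+1+1), f i
          = f 0 + (∑ i ∈ Finset.range M, f (i+1)) + f (M+1) := by
        intro f
        rw [Finset.sum_range_succ, Finset.sum_range_succ']
        ring
      rw [expand, expand]
      have e0 : n+1-2-0 = n-1 := by omega
      have e1 : M+1-(M+1) = 0 := by omega
      have e2 : n-1 = (n-2)+1 := by omega
      have e3 : M+1-0 = M+1 := by omega
      rw [e0, e1, e3, e2, Nat.choose_succ_succ (n-2) M, Nat.choose_succ_succ n M]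
      simp only [Nat.sub_zero, Nat.choose_zero_right, pow_zero, Nat.cast_one, one_mul,
        mul_one, Nat.cast_add]
      push_cast at hd ⊢
      linear_combination hd

/-- For any real `ρ` and real sequence `Φ` with `Φ(1) = ρ`, one has
`Φ(n) = Φ(n:1) + Φ(n:2) + ⋯ + Φ(n:n)` for every `n ≥ 1`. -/
theorem phi_eq_sum_phiNM (ρ : ℝ) (Φ : ℕ → ℝ) (hΦ1 : Φ 1 = ρ) :
    ∀ n, 1 ≤ n → Φ n = ∑ m ∈ Finset.Icc 1 n, phiNM Φ ρ n m := by
  intro n hn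
  set Ψ := psiOf Φ ρ with hΨ
  have hins : Finset.Icc 1 n = insert 1 (Finset.Icc 2 n) := by
    ext x; simp only [Finset.mem_Icc, Finset.mem_insert]; omega
  have h1 : phiNM Φ ρ n 1 = ρ * n := by simp [phiNM]
  have hsum2 : ∑ m ∈ Finset.Icc 2 n, phiNM Φ ρ n m = Φ n - ρ * n := by
    rcases Nat.lt_or_ge n 2 with h2 | h2
    · have : n = 1 := by omega
      subst this
      simp [hΦ1]
    · -- Step A: rewrite each phiNM as a negated double-sum term
      have stepA : ∀ m ∈ Finset.Icc 2 n, phiNM Φ ρ n m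
          = -∑ i ∈ Finset.range (m-1),
              (-1:ℝ)^i * (n.choose m : ℝ) * ((m-2).choose i : ℝ) * Ψ (n-m+1+i) := by
        intro m hm
        simp only [Finset.mem_Icc] at hm
        have hm1 : m ≠ 1 := by omega
        rw [phiNM, if_neg hm1, nablaIter]
        rw [show m-2+1 = m-1 by omega]
        rw [Finset.mul_sum]
        rw [← Finset.sum_neg_distrib]
        apply Finset.sum_congr rfl
        intro i _
        ring
      rw [Finset.sum_congr rfl stepA]
      rw [Finset.sum_neg_distrib]
      have stepB : (∑ m ∈ Finset.Icc 2 n, ∑ i ∈ Finset.range (m-1),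
            (-1:ℝ)^i * (n.choose m : ℝ) * ((m-2).choose i : ℝ) * Ψ (n-m+1+i))
          = ∑ k ∈ Finset.Icc 1 (n-1), ∑ j ∈ Finset.range k,
            (-1:ℝ)^(k-1-j) * (n.choose (n-j) : ℝ) * ((n-j-2).choose (k-1-j) : ℝ) * Ψ k := by
        rw [Finset.sum_sigma', Finset.sum_sigma']
        refine Finset.sum_nbij' (fun x => ⟨n - x.1 + 1 + x.2, n - x.1⟩)
          (fun y => ⟨n - y.2, y.1 - 1 - y.2⟩) ?_ ?_ ?_ ?_ ?_
        · rintro ⟨m, i⟩ hx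
          simp only [Finset.mem_sigma, Finset.mem_Icc, Finset.mem_range] at hx ⊢
          omega
        · rintro ⟨k, j⟩ hy
          simp only [Finset.mem_sigma, Finset.mem_Icc, Finset.mem_range] at hy ⊢
          omega
        · rintro ⟨m, i⟩ hx
          simp only [Finset.mem_sigma, Finset.mem_Icc, Finset.mem_range] at hx
          have e1 : n - (n - m) = m := by omega
          have e2 : n - m + 1 + i - 1 - (n - m) = i := by omega
          exact Sigma.ext e1 (heq_of_eq e2)
        · rintro ⟨k, j⟩ hy
          simp only [Finset.mem_sigma, Finset.mem_Icc, Finset.mem_range] at hy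
          have e1 : n - (n - j) + 1 + (k - 1 - j) = k := by omega
          have e2 : n - (n - j) = j := by omega
          exact Sigma.ext e1 (heq_of_eq e2)
        · rintro ⟨m, i⟩ hx
          simp only [Finset.mem_sigma, Finset.mem_Icc, Finset.mem_range] at hx
          have e1 : n - m + 1 + i - 1 - (n - m) = i := by omega
          have e2 : n - (n - m) = m := by omega
          simp only [e1, e2]
      have stepC : ∀ k ∈ Finset.Icc 1 (n-1), (∑ j ∈ Finset.range k,
            (-1:ℝ)^(k-1-j) * (n.choose (n-j) : ℝ) * ((n-j-2).choose (k-1-j) : ℝ) * Ψ k)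
          = phiBar Φ ρ k - phiBar Φ ρ (k+1) := by
        intro k hk
        simp only [Finset.mem_Icc] at hk
        obtain ⟨K, rfl⟩ : ∃ K, k = K + 1 := ⟨k - 1, by omega⟩
        have hKn : K + 2 ≤ n := by omega
        have hterm : ∀ j ∈ Finset.range (K+1),
            (-1:ℝ)^(K+1-1-j) * (n.choose (n-j) : ℝ) * ((n-j-2).choose (K+1-1-j) : ℝ) * Ψ (K+1)
            = (-1:ℝ)^K * ((-1:ℝ)^j * (n.choose j : ℝ) * ((n-2-j).choose (K-j) : ℝ)) * Ψ (K+1) := by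
          intro j hj
          simp only [Finset.mem_range] at hj
          have hjn : j ≤ n := by omega
          have e0 : K+1-1-j = K-j := by omega
          have e1 : n-j-2 = n-2-j := by omega
          have e2 : n.choose (n-j) = n.choose j := Nat.choose_symm hjn
          have e3 : (-1:ℝ)^K * (-1:ℝ)^j = (-1:ℝ)^(K-j) := by
            rw [← pow_add, show K+j = (K-j) + 2*j by omega, pow_add, pow_mul]
            norm_num
          rw [e0, e1, e2, ← e3]
          ring
        rw [Finset.sum_congr rfl hterm, ← Finset.sum_mul, ← Finset.mul_sum, keyB K n hKn]
        have heven : (-1:ℝ)^K * (-1:ℝ)^K = 1 := by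
          rw [← pow_add]
          exact Even.neg_one_pow ⟨K, rfl⟩
        have hΨK : Ψ (K+1) = (phiBar Φ ρ (K+1) - phiBar Φ ρ (K+1+1)) / ((K:ℝ)+1) := by
          rw [hΨ, psiOf]
          push_cast
          ring
        rw [hΨK, show (-1:ℝ)^K * ((-1:ℝ)^K * ((K:ℝ)+1)) = (K:ℝ)+1 from by
          rw [← mul_assoc, heven]; ring]
        have hK0 : ((K:ℝ)+1) ≠ 0 := by positivity
        field_simp
      have stepD : ∑ k ∈ Finset.Icc 1 (n-1), (phiBar Φ ρ k - phiBar Φ ρ (k+1))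
          = -(Φ n - ρ * n) := by
        calc ∑ k ∈ Finset.Icc 1 (n-1), (phiBar Φ ρ k - phiBar Φ ρ (k+1))
            = ∑ i ∈ Finset.range (n-1),
              ((fun i => phiBar Φ ρ (1+i)) i - (fun i => phiBar Φ ρ (1+i)) (i+1)) := by
              rw [show Finset.Icc 1 (n-1) = Finset.Ico 1 n from by
                  ext x; simp only [Finset.mem_Icc, Finset.mem_Ico]; omega,
                Finset.sum_Ico_eq_sum_range]
              apply Finset.sum_congr rfl
              intro i _
              simp only []
              rw [show 1+(i+1) = 1+i+1 from by omega]
          _ = phiBar Φ ρ (1+0) - phiBar Φ ρ (1+(n-1)) := Finset.sum_range_sub' _ _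
          _ = -(Φ n - ρ * n) := by
              rw [show 1+(n-1) = n from by omega]
              simp only [phiBar, hΦ1]
              push_cast
              ring
      rw [stepB, Finset.sum_congr rfl stepC, stepD, neg_neg]
  rw [hins, Finset.sum_insert (by simp), h1, hsum2]
  ring
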